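/- Let a, b, u₀ be real numbers and let ε be real with aε ≠ 1. Define λ(ε) = (a + b)/(1 − aε), z(t) = u₀·e^{−λ(ε)·t}, and g(ε) = a·e^{λ(ε)·ε} + b − λ(ε). Then: (i) for all real t, z'(t) + a·z(t − ε) + b·z(t) = g(ε)·z(t), so z exactly solves the delay equation with the coefficient b replaced by b + g(ε); and (ii) g(0) = 0 and g'(0) = 0, so the backward error g(ε) is O(ε²) as ε → 0. -/

import Mathlib

/-- Backward error for the vanishing-lag delay equation
`ẏ(t) + a·y(t − ε) + b·y(t) = 0`: the approximation
`z(t) = u₀·e^{−λ(ε)t}`, `λ(ε) = (a+b)/(1−aε)`, exactly solves the delay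
equation with `b` replaced by `b + g(ε)` where
`g(ε) = a·e^{λ(ε)ε} + b − λ(ε)` satisfies `g(0) = 0` and `g'(0) = 0`,
i.e. the backward error is `O(ε²)`. -/
theorem stmt17 (a b u₀ ε : ℝ) (hε : a * ε ≠ 1) :
    let lam : ℝ → ℝ := fun e => (a + b) / (1 - a*e)
    let g : ℝ → ℝ := fun e => a * Real.exp (lam e * e) + b - lam e
    let z : ℝ → ℝ := fun t => u₀ * Real.exp (-(lam ε) * t)
    (∀ t : ℝ, deriv z t + a * z (t - ε) + b * z t = g ε * z t) ∧
    g 0 = 0 ∧ deriv g 0 = 0 := by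
  intro lam g z
  refine ⟨?_, ?_, ?_⟩
  · intro t
    have hz : HasDerivAt z (u₀ * (Real.exp (-(lam ε) * t) * (-(lam ε)))) t := by
      have h1 : HasDerivAt (fun t : ℝ => -(lam ε) * t) (-(lam ε)) t :=
        by simpa using (hasDerivAt_id t).const_mul (-(lam ε))
      exact (h1.exp).const_mul u₀
    rw [hz.deriv]
    have hsplit : Real.exp (-(lam ε) * (t - ε))
        = Real.exp (lam ε * ε) * Real.exp (-(lam ε) * t) := by
      rw [← Real.exp_add]; ring_nf
    simp only [z, g, hsplit]
    ring
  · simp [g, lam]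
  · have hu : HasDerivAt (fun e : ℝ => 1 - a*e) (-a) 0 := by
      simpa using ((hasDerivAt_id (0:ℝ)).const_mul a).const_sub 1
    have h0 : (1 - a*(0:ℝ)) ≠ 0 := by norm_num
    have hlam : HasDerivAt lam ((a + b) * a) 0 := by
      have := (hasDerivAt_const (0:ℝ) (a+b)).div hu h0
      simpa [lam, Pi.div_def] using this.congr_deriv (by field_simp; ring)
    have hle : HasDerivAt (fun e => lam e * e) (a + b) 0 := by
      have := hlam.mul (hasDerivAt_id (0:ℝ))
      simpa [lam, Pi.mul_def] using this
    have hexp : HasDerivAt (fun e => Real.exp (lam e * e)) (a + b) 0 := by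
      have := hle.exp
      simpa [lam] using this
    have hg : HasDerivAt g 0 0 := by
      have := ((hexp.const_mul a).add_const b).sub hlam
      simpa [g, Pi.sub_def] using this.congr_deriv (by ring)
    exact hg.deriv
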